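/- Weighted conservation law on a time slab: let n ≥ 2, let V be a real inner product space, let g : ℝ^{1+n} → ℝ^{(n+1)×(n+1)} be a C¹ family of symmetric matrices, let Φ : ℝ^{1+n} → V be C², let ω : ℝ → ℝ be C¹, and let t₁ ≤ t₂. Assume the support of Φ intersected with [t₁,t₂] × ℝⁿ is compact. Then, writing q := |x| − τ and T_{r0} := Σ_{j=1}^{n} (x_j/|x|) T_{j0} (defined for x ≠ 0, hence almost everywhere), ∫_{ℝⁿ} T_{00}(Φ)(t₂,x) ω(|x|−t₂) dx + ∫_{t₁}^{t₂} ∫_{ℝⁿ} ( T_{00}(Φ) + T_{r0}(Φ) )(τ,x) ω′(q) dx dτ + ∫_{t₁}^{t₂} ∫_{ℝⁿ} ( Σ_{μ=0}^{n} ∂_μ T^μ_0(Φ) )(τ,x) ω(q) dx dτ = ∫_{ℝⁿ} T_{00}(Φ)(t₁,x) ω(|x|−t₁) dx. -/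

import Mathlib

open scoped BigOperators RealInnerProductSpace
open MeasureTheory

noncomputable section

/-- Standard basis vector of ℝ^{1+n}. -/
def basisVec (n : ℕ) (μ : Fin (n+1)) : Fin (n+1) → ℝ := Pi.single μ 1

/-- Partial derivative ∂_μ of a map defined on ℝ^{1+n}. -/
def pdv {n : ℕ} {V : Type*} [NormedAddCommGroup V] [NormedSpace ℝ V]
    (Φ : (Fin (n+1) → ℝ) → V) (μ : Fin (n+1)) (p : Fin (n+1) → ℝ) : V :=
  fderiv ℝ Φ p (basisVec n μ)

/-- The Minkowski matrix m = diag(−1,1,…,1). -/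
def mink (n : ℕ) (μ ν : Fin (n+1)) : ℝ :=
  if μ = ν then (if μ = 0 then -1 else 1) else 0

/-- The energy tensor T^μ_ν(Φ) built from the (inverse) metric g. -/
def Tup {n : ℕ} {V : Type*} [NormedAddCommGroup V] [InnerProductSpace ℝ V]
    (g : (Fin (n+1) → ℝ) → Fin (n+1) → Fin (n+1) → ℝ)
    (Φ : (Fin (n+1) → ℝ) → V) (μ ν : Fin (n+1)) (p : Fin (n+1) → ℝ) : ℝ :=
  (∑ α, g p μ α * ⟪pdv Φ α p, pdv Φ ν p⟫)
    - (1/2) * (if μ = ν then (1:ℝ) else 0) *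
        ∑ α, ∑ β, g p α β * ⟪pdv Φ α p, pdv Φ β p⟫

/-- The lowered energy tensor T_{μν} := m_{μμ} T^μ_ν (no sum; m diagonal). -/
def Tlow {n : ℕ} {V : Type*} [NormedAddCommGroup V] [InnerProductSpace ℝ V]
    (g : (Fin (n+1) → ℝ) → Fin (n+1) → Fin (n+1) → ℝ)
    (Φ : (Fin (n+1) → ℝ) → V) (μ ν : Fin (n+1)) (p : Fin (n+1) → ℝ) : ℝ :=
  mink n μ μ * Tup g Φ μ ν p

/-- The spatial radius r = |x|. -/
def rad (n : ℕ) (x : Fin n → ℝ) : ℝ := Real.sqrt (∑ i, (x i)^2)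

/-! ### Auxiliary lemmas -/

section Aux

/-- The continuous linear map `y ↦ Fin.cons 0 y`. -/
def consCLM (n : ℕ) : (Fin n → ℝ) →L[ℝ] (Fin (n+1) → ℝ) :=
  ContinuousLinearMap.pi (fun i => Fin.cases 0 (fun j => ContinuousLinearMap.proj j) i)

lemma consCLM_apply {n : ℕ} (y : Fin n → ℝ) : consCLM n y = Fin.cons 0 y := by
  funext i
  induction i using Fin.cases with
  | zero => simp [consCLM]
  | succ j => simp [consCLM]

/-- The continuous linear map `y ↦ ∑ i, x i * y i`. -/
def dotCLM {n : ℕ} (x : Fin n → ℝ) : (Fin n → ℝ) →L[ℝ] ℝ :=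
  ∑ i, x i • ContinuousLinearMap.proj i

lemma dotCLM_apply {n : ℕ} (x y : Fin n → ℝ) : dotCLM x y = ∑ i, x i * y i := by
  simp [dotCLM]

lemma dotCLM_single {n : ℕ} (x : Fin n → ℝ) (j : Fin n) :
    dotCLM x (Pi.single j 1) = x j := by
  rw [dotCLM_apply]
  rw [Finset.sum_eq_single j] <;> simp +contextual [Pi.single_apply]

lemma cons_eq_add {n : ℕ} (τ : ℝ) (y : Fin n → ℝ) :
    Fin.cons τ y = Fin.cons τ (0 : Fin n → ℝ) + consCLM n y := by
  funext i
  induction i using Fin.cases with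
  | zero => simp [consCLM_apply]
  | succ j => simp [consCLM_apply]

lemma hasFDerivAt_cons_spatial {n : ℕ} (τ : ℝ) (x : Fin n → ℝ) :
    HasFDerivAt (fun y : Fin n → ℝ => (Fin.cons τ y : Fin (n+1) → ℝ)) (consCLM n) x := by
  have : (fun y : Fin n → ℝ => (Fin.cons τ y : Fin (n+1) → ℝ))
      = fun y => Fin.cons τ (0 : Fin n → ℝ) + consCLM n y := by
    funext y; exact cons_eq_add τ y
  rw [this]
  exact ((consCLM n).hasFDerivAt).const_add _

lemma cons_eq_add_time {n : ℕ} (x : Fin n → ℝ) (s : ℝ) :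
    (Fin.cons s x : Fin (n+1) → ℝ) = Fin.cons 0 x + s • basisVec n 0 := by
  funext i
  induction i using Fin.cases with
  | zero => simp [basisVec]
  | succ j => simp [basisVec, Pi.single_apply, Fin.succ_ne_zero]

lemma hasDerivAt_cons_time {n : ℕ} (x : Fin n → ℝ) (s : ℝ) :
    HasDerivAt (fun s : ℝ => (Fin.cons s x : Fin (n+1) → ℝ)) (basisVec n 0) s := by
  have : (fun s : ℝ => (Fin.cons s x : Fin (n+1) → ℝ))
      = fun s : ℝ => Fin.cons 0 x + s • basisVec n 0 := by
    funext s; exact cons_eq_add_time x s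
  rw [this]
  simpa using ((hasDerivAt_id s).smul_const (basisVec n 0)).const_add (Fin.cons 0 x)

lemma consCLM_single {n : ℕ} (j : Fin n) :
    consCLM n (Pi.single j 1) = basisVec n j.succ := by
  rw [consCLM_apply]
  funext i
  induction i using Fin.cases with
  | zero => simp [basisVec, Pi.single_apply, (Fin.succ_ne_zero j).symm]
  | succ k => simp [basisVec, Pi.single_apply, Fin.succ_inj]

lemma continuous_rad {n : ℕ} : Continuous (rad n) :=
  Real.continuous_sqrt.comp (continuous_finset_sum _ fun i _ => ((continuous_apply i).pow 2))

lemma rad_nonneg {n : ℕ} (x : Fin n → ℝ) : 0 ≤ rad n x := Real.sqrt_nonneg _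

lemma abs_le_rad {n : ℕ} (x : Fin n → ℝ) (j : Fin n) : |x j| ≤ rad n x := by
  rw [← Real.sqrt_sq_eq_abs]
  exact Real.sqrt_le_sqrt (Finset.single_le_sum (f := fun i => (x i)^2)
    (fun i _ => sq_nonneg _) (Finset.mem_univ j))

lemma rad_pos {n : ℕ} {x : Fin n → ℝ} (hx : x ≠ 0) : 0 < rad n x := by
  obtain ⟨j, hj⟩ : ∃ j, x j ≠ 0 := by
    by_contra h; push_neg at h; exact hx (funext h)
  calc (0:ℝ) < |x j| := abs_pos.2 hj
  _ ≤ rad n x := abs_le_rad x j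

lemma div_rad_le_one {n : ℕ} (x : Fin n → ℝ) (j : Fin n) : |x j / rad n x| ≤ 1 := by
  rcases eq_or_ne x 0 with rfl | hx
  · simp
  · rw [abs_div, abs_of_nonneg (rad_nonneg x)]
    exact div_le_one_of_le₀ (abs_le_rad x j) (rad_nonneg x)

lemma hasFDerivAt_rad {n : ℕ} {x : Fin n → ℝ} (hx : x ≠ 0) :
    HasFDerivAt (rad n) ((rad n x)⁻¹ • dotCLM x) x := by
  have hs : HasFDerivAt (fun y : Fin n → ℝ => ∑ i, (y i)^2)
      (∑ i : Fin n, ((x i • (ContinuousLinearMap.proj i : (Fin n → ℝ) →L[ℝ] ℝ))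
        + x i • (ContinuousLinearMap.proj i)) ) x := by
    have h1 : HasFDerivAt (fun y : Fin n → ℝ => ∑ i, y i * y i)
        (∑ i : Fin n, ((x i • (ContinuousLinearMap.proj i : (Fin n → ℝ) →L[ℝ] ℝ))
          + x i • (ContinuousLinearMap.proj i)) ) x := by
      apply HasFDerivAt.fun_sum
      intro i _
      exact ((ContinuousLinearMap.proj i : (Fin n → ℝ) →L[ℝ] ℝ).hasFDerivAt (x := x)).mul
        ((ContinuousLinearMap.proj i : (Fin n → ℝ) →L[ℝ] ℝ).hasFDerivAt (x := x))
    have : (fun y : Fin n → ℝ => ∑ i, (y i)^2) = fun y : Fin n → ℝ => ∑ i, y i * y i := by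
      funext y; exact Finset.sum_congr rfl fun i _ => sq (y i)
    rw [this]; exact h1
  have hpos : (0:ℝ) < ∑ i, (x i)^2 := by
    have h := rad_pos hx
    rw [rad] at h
    exact Real.sqrt_pos.mp h
  have hsq : HasDerivAt Real.sqrt (1 / (2 * Real.sqrt (∑ i, (x i)^2))) (∑ i, (x i)^2) :=
    Real.hasDerivAt_sqrt hpos.ne'
  have hcomp := hsq.comp_hasFDerivAt x hs
  have hr : rad n x ≠ 0 := (rad_pos hx).ne'
  refine (show HasFDerivAt (rad n) _ x from hcomp).congr_fderiv ?_
  symm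
  ext y
  simp only [ContinuousLinearMap.smul_apply, dotCLM_apply, ContinuousLinearMap.coe_sum',
    Finset.sum_apply, ContinuousLinearMap.coe_smul', Pi.smul_apply, ContinuousLinearMap.add_apply,
    ContinuousLinearMap.proj_apply, smul_eq_mul]
  rw [Finset.mul_sum, Finset.mul_sum]
  apply Finset.sum_congr rfl
  intro i _
  rw [rad] at hr ⊢
  field_simp
  ring

section TupFacts
variable {n : ℕ} {V : Type*} [NormedAddCommGroup V] [InnerProductSpace ℝ V]
  {g : (Fin (n+1) → ℝ) → Fin (n+1) → Fin (n+1) → ℝ}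
  {Φ : (Fin (n+1) → ℝ) → V}

lemma contDiff_pdv (hΦ : ContDiff ℝ 2 Φ) (α : Fin (n+1)) : ContDiff ℝ 1 (pdv Φ α) :=
  (hΦ.fderiv_right (by norm_num)).clm_apply contDiff_const

lemma contDiff_Tup (hg : ∀ μ ν, ContDiff ℝ 1 (fun p => g p μ ν))
    (hΦ : ContDiff ℝ 2 Φ) (μ ν : Fin (n+1)) : ContDiff ℝ 1 (Tup g Φ μ ν) := by
  apply ContDiff.sub
  · exact ContDiff.sum fun α _ =>
      (hg μ α).mul (((contDiff_pdv hΦ α).inner ℝ (contDiff_pdv hΦ ν)))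
  · exact (contDiff_const.mul contDiff_const).mul <| ContDiff.sum fun α _ =>
      ContDiff.sum fun β _ => (hg α β).mul
        ((contDiff_pdv hΦ α).inner ℝ (contDiff_pdv hΦ β))

lemma pdv_eq_zero_of_not_mem {W : Type*} [NormedAddCommGroup W] [NormedSpace ℝ W]
    {f : (Fin (n+1) → ℝ) → W} {p : Fin (n+1) → ℝ} (hp : p ∉ tsupport f) (μ : Fin (n+1)) :
    pdv f μ p = 0 := by
  rw [pdv, fderiv_of_notMem_tsupport _ hp]; rfl

lemma Tup_eq_zero_of_not_mem {p : Fin (n+1) → ℝ} (hp : p ∉ tsupport Φ) (μ ν : Fin (n+1)) :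
    Tup g Φ μ ν p = 0 := by
  simp [Tup, pdv_eq_zero_of_not_mem hp]

lemma pdv_Tup_eq_zero_of_not_mem {p : Fin (n+1) → ℝ} (hp : p ∉ tsupport Φ)
    (μ ν κ : Fin (n+1)) : pdv (Tup g Φ μ ν) κ p = 0 := by
  have hev : Tup g Φ μ ν =ᶠ[nhds p] 0 := by
    have : ∀ᶠ q in nhds p, q ∉ tsupport Φ :=
      (isClosed_tsupport Φ).isOpen_compl.eventually_mem hp
    filter_upwards [this] with q hq
    exact Tup_eq_zero_of_not_mem hq μ ν
  rw [pdv, hev.fderiv_eq, show (0 : (Fin (n+1) → ℝ) → ℝ) = fun _ => 0 from rfl,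
    fderiv_const_apply]
  rfl

end TupFacts

lemma slice_integrable' {n : ℕ} (f : (Fin n → ℝ) → ℝ)
    (hm : AEStronglyMeasurable f (volume : Measure (Fin n → ℝ)))
    (c : (Fin n → ℝ) → ℝ) (hc : Continuous c) (hb : ∀ x, |f x| ≤ c x)
    (R : ℝ) (h0 : ∀ x, R < ‖x‖ → f x = 0) :
    Integrable f (volume : Measure (Fin n → ℝ)) := by
  obtain ⟨M, hM⟩ := (isCompact_closedBall (0 : Fin n → ℝ) R).exists_bound_of_continuousOn
    hc.continuousOn
  refine Integrable.mono' (g := (Metric.closedBall (0 : Fin n → ℝ) R).indicator fun _ => M)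
    ?_ hm (Filter.Eventually.of_forall fun x => ?_)
  · rw [integrable_indicator_iff measurableSet_closedBall]
    exact (integrableOn_const_iff enorm_ne_top).2 (Or.inr (isCompact_closedBall _ _).measure_lt_top)
  · by_cases hx : ‖x‖ ≤ R
    · have hxm : x ∈ Metric.closedBall (0 : Fin n → ℝ) R := by
        simpa [mem_closedBall_zero_iff] using hx
      rw [Set.indicator_of_mem hxm]
      calc ‖f x‖ = |f x| := rfl
      _ ≤ c x := hb x
      _ ≤ ‖c x‖ := le_abs_self _
      _ ≤ M := hM x hxm
    · have hxm : x ∉ Metric.closedBall (0 : Fin n → ℝ) R := by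
        simpa [mem_closedBall_zero_iff] using hx
      rw [Set.indicator_of_notMem hxm, h0 x (lt_of_not_ge hx)]
      simp

lemma prod_integrable' {n : ℕ} (t₁ t₂ R : ℝ) (f : ℝ × (Fin n → ℝ) → ℝ)
    (hm : AEStronglyMeasurable f ((volume.restrict (Set.Ioc t₁ t₂)).prod volume))
    (c : ℝ × (Fin n → ℝ) → ℝ) (hc : Continuous c) (hb : ∀ p, |f p| ≤ c p)
    (h0 : ∀ τ ∈ Set.Icc t₁ t₂, ∀ x : Fin n → ℝ, R < ‖x‖ → f (τ, x) = 0) :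
    Integrable f ((volume.restrict (Set.Ioc t₁ t₂)).prod volume) := by
  set C : Set (ℝ × (Fin n → ℝ)) := Set.Icc t₁ t₂ ×ˢ Metric.closedBall 0 R with hC
  have hCcomp : IsCompact C := isCompact_Icc.prod (isCompact_closedBall _ _)
  obtain ⟨M, hM⟩ := hCcomp.exists_bound_of_continuousOn hc.continuousOn
  have hCm : MeasurableSet C := measurableSet_Icc.prod measurableSet_closedBall
  have hmeaseq : (volume.restrict (Set.Ioc t₁ t₂)).prod (volume : Measure (Fin n → ℝ))
      = ((volume : Measure ℝ).prod volume).restrict (Set.Ioc t₁ t₂ ×ˢ Set.univ) := by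
    rw [← Measure.prod_restrict, Measure.restrict_univ]
  have hae : ∀ᵐ p ∂((volume.restrict (Set.Ioc t₁ t₂)).prod (volume : Measure (Fin n → ℝ))),
      p ∈ Set.Ioc t₁ t₂ ×ˢ (Set.univ : Set (Fin n → ℝ)) := by
    rw [hmeaseq]
    exact ae_restrict_mem (measurableSet_Ioc.prod MeasurableSet.univ)
  refine Integrable.mono' (g := C.indicator fun _ => M) ?_ hm ?_
  · rw [integrable_indicator_iff hCm]
    refine (integrableOn_const_iff enorm_ne_top).2 (Or.inr ?_)
    calc ((volume.restrict (Set.Ioc t₁ t₂)).prod (volume : Measure (Fin n → ℝ))) C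
        = (((volume : Measure ℝ).prod volume).restrict (Set.Ioc t₁ t₂ ×ˢ Set.univ)) C := by
          rw [hmeaseq]
      _ ≤ ((volume : Measure ℝ).prod volume) C := by
          rw [Measure.restrict_apply hCm]; exact measure_mono Set.inter_subset_left
      _ < ⊤ := hCcomp.measure_lt_top
  · filter_upwards [hae] with p hp
    obtain ⟨hp1, -⟩ := hp
    by_cases hx : ‖p.2‖ ≤ R
    · have hpC : p ∈ C := ⟨Set.mem_Icc_of_Ioc hp1, by simpa [mem_closedBall_zero_iff] using hx⟩
      rw [Set.indicator_of_mem hpC]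
      calc ‖f p‖ = |f p| := rfl
      _ ≤ c p := hb p
      _ ≤ ‖c p‖ := le_abs_self _
      _ ≤ M := hM p hpC
    · have hpC : p ∉ C := by
        intro hmem
        exact hx (by simpa [mem_closedBall_zero_iff] using hmem.2)
      rw [Set.indicator_of_notMem hpC,
        h0 p.1 (Set.mem_Icc_of_Ioc hp1) p.2 (lt_of_not_ge hx)]
      simp

lemma fderiv_zero_of_far {m : ℕ} (f : (Fin m → ℝ) → ℝ) (R : ℝ)
    (h0 : ∀ x : Fin m → ℝ, R < ‖x‖ → f x = 0) :
    ∀ x : Fin m → ℝ, R < ‖x‖ → fderiv ℝ f x = 0 := by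
  intro x hx
  have hev : f =ᶠ[nhds x] 0 := by
    have hopen : IsOpen {y : Fin m → ℝ | R < ‖y‖} := isOpen_lt continuous_const continuous_norm
    filter_upwards [hopen.eventually_mem hx] with y hy
    exact h0 y hy
  rw [hev.fderiv_eq, show (0 : (Fin m → ℝ) → ℝ) = fun _ => (0:ℝ) from rfl, fderiv_const_apply]

lemma divergence_zero {m : ℕ} (f : Fin (m+1) → (Fin (m+1) → ℝ) → ℝ)
    (hc : ∀ j, Continuous (f j))
    (hd : ∀ x : Fin (m+1) → ℝ, x ≠ 0 → ∀ j, DifferentiableAt ℝ (f j) x)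
    (hi : Integrable (fun x : Fin (m+1) → ℝ => ∑ j, fderiv ℝ (f j) x (Pi.single j 1)))
    (R : ℝ) (hR : 0 ≤ R)
    (h0 : ∀ j, ∀ x : Fin (m+1) → ℝ, R < ‖x‖ → f j x = 0) :
    ∫ x : Fin (m+1) → ℝ, ∑ j, fderiv ℝ (f j) x (Pi.single j 1) = 0 := by
  set a : Fin (m+1) → ℝ := fun _ => -(R+1) with ha
  set b : Fin (m+1) → ℝ := fun _ => (R+1) with hb
  have hle : a ≤ b := fun i => by simp [ha, hb]; linarith
  have hdiv0 : ∀ x : Fin (m+1) → ℝ, R < ‖x‖ →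
      (∑ j, fderiv ℝ (f j) x (Pi.single j 1)) = 0 := by
    intro x hx
    have : ∀ j : Fin (m+1), fderiv ℝ (f j) x = 0 := fun j =>
      fderiv_zero_of_far (f j) R (h0 j) x hx
    simp [this]
  have key := integral_divergence_of_hasFDerivAt_off_countable' a b hle f
    (fun j x => fderiv ℝ (f j) x) {0} (Set.countable_singleton 0)
    (fun j => (hc j).continuousOn)
    (fun x hx j => by
      have hx0 : x ≠ 0 := by
        intro h; exact hx.2 (by simp [h])
      exact (hd x hx0 j).hasFDerivAt)
    hi.integrableOn
  have hfar : ∀ (c : ℝ), R + 1 ≤ |c| → ∀ i : Fin (m+1), ∀ y : Fin m → ℝ,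
      R < ‖(i.insertNth c y : Fin (m+1) → ℝ)‖ := by
    intro c hcabs i y
    have hcoord : (i.insertNth c y : Fin (m+1) → ℝ) i = c := by simp
    calc R < R + 1 := by linarith
    _ ≤ |c| := hcabs
    _ = ‖(i.insertNth c y : Fin (m+1) → ℝ) i‖ := by rw [hcoord]; rfl
    _ ≤ ‖(i.insertNth c y : Fin (m+1) → ℝ)‖ := norm_le_pi_norm _ i
  have hfaces : ∀ i : Fin (m+1),
      ((∫ x in Set.Icc (a ∘ i.succAbove) (b ∘ i.succAbove), f i (i.insertNth (b i) x)) -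
        ∫ x in Set.Icc (a ∘ i.succAbove) (b ∘ i.succAbove), f i (i.insertNth (a i) x)) = 0 := by
    intro i
    have h1 : ∀ y : Fin m → ℝ, f i (i.insertNth (b i) y : Fin (m+1) → ℝ) = 0 := by
      intro y
      have hbi : b i = R + 1 := rfl
      exact h0 i _ (hfar (b i) (by rw [hbi, abs_of_pos (by linarith)]) i y)
    have h2 : ∀ y : Fin m → ℝ, f i (i.insertNth (a i) y : Fin (m+1) → ℝ) = 0 := by
      intro y
      have hai : a i = -(R + 1) := rfl
      exact h0 i _ (hfar (a i) (by rw [hai, abs_neg, abs_of_pos (by linarith)]) i y)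
    simp [h1, h2]
  rw [Finset.sum_congr rfl (fun i _ => hfaces i), Finset.sum_const_zero] at key
  rw [← key]
  symm
  apply setIntegral_eq_integral_of_forall_compl_eq_zero
  intro x hx
  apply hdiv0
  have : ¬ (∀ i, a i ≤ x i ∧ x i ≤ b i) := by
    intro h
    exact hx (Set.mem_Icc.mpr ⟨fun i => (h i).1, fun i => (h i).2⟩)
  push_neg at this
  obtain ⟨i, hi'⟩ := this
  have habs : R + 1 < |x i| := by
    by_cases h : a i ≤ x i
    · have h2 := hi' h
      have hbi : b i = R + 1 := rfl
      rw [hbi] at h2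
      rw [abs_of_pos (by linarith)]
      exact h2
    · push_neg at h
      have hai : a i = -(R + 1) := rfl
      rw [hai] at h
      rw [abs_of_neg (by linarith)]
      linarith
  calc R < R + 1 := by linarith
  _ < |x i| := habs
  _ ≤ ‖x‖ := by simpa using norm_le_pi_norm x i

end Aux

/-- weighted conservation law on a time slab, for spatially
compactly supported fields and a C¹ weight ω. -/
theorem stmt16 {n : ℕ} (hn : 2 ≤ n) {V : Type*} [NormedAddCommGroup V] [InnerProductSpace ℝ V]
    (g : (Fin (n+1) → ℝ) → Fin (n+1) → Fin (n+1) → ℝ)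
    (hgsymm : ∀ p μ ν, g p μ ν = g p ν μ)
    (hg : ∀ μ ν, ContDiff ℝ 1 (fun p => g p μ ν))
    (Φ : (Fin (n+1) → ℝ) → V) (hΦ : ContDiff ℝ 2 Φ)
    (ω : ℝ → ℝ) (hω : ContDiff ℝ 1 ω)
    (t₁ t₂ : ℝ) (ht : t₁ ≤ t₂)
    (hsupp : IsCompact (tsupport Φ ∩ {p : Fin (n+1) → ℝ | t₁ ≤ p 0 ∧ p 0 ≤ t₂})) :
    (∫ x : Fin n → ℝ, Tlow g Φ 0 0 (Fin.cons t₂ x) * ω (rad n x - t₂))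
      + (∫ τ in t₁..t₂, ∫ x : Fin n → ℝ,
          (Tlow g Φ 0 0 (Fin.cons τ x)
              + ∑ j : Fin n, (x j / rad n x) * Tlow g Φ j.succ 0 (Fin.cons τ x))
            * deriv ω (rad n x - τ))
      + (∫ τ in t₁..t₂, ∫ x : Fin n → ℝ,
          (∑ μ, pdv (Tup g Φ μ 0) μ (Fin.cons τ x)) * ω (rad n x - τ))
      = ∫ x : Fin n → ℝ, Tlow g Φ 0 0 (Fin.cons t₁ x) * ω (rad n x - t₁) := by
  obtain ⟨m, rfl⟩ : ∃ m, n = m + 1 := ⟨n - 1, by omega⟩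
  clear hn hgsymm
  -- basic smoothness facts
  have hωd : Differentiable ℝ ω := hω.differentiable one_ne_zero
  have hωc : Continuous ω := hω.continuous
  have hω'c : Continuous (deriv ω) := hω.continuous_deriv le_rfl
  have hU : ∀ μ ν, ContDiff ℝ 1 (Tup g Φ μ ν) := contDiff_Tup hg hΦ
  have hUc : ∀ μ ν, Continuous (Tup g Φ μ ν) := fun μ ν => (hU μ ν).continuous
  have hUd : ∀ μ ν, Differentiable ℝ (Tup g Φ μ ν) := fun μ ν => (hU μ ν).differentiable one_ne_zero
  have hpdvc : ∀ μ ν κ, Continuous (pdv (Tup g Φ μ ν) κ) := fun μ ν κ =>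
    (((hU μ ν).fderiv_right (m := 0) (by norm_num)).clm_apply contDiff_const).continuous
  have hTlowC : ∀ μ ν, Continuous (Tlow g Φ μ ν) := fun μ ν => continuous_const.mul (hUc μ ν)
  have hTlow00 : ∀ p, Tlow g Φ 0 0 p = -Tup g Φ 0 0 p := fun p => by
    simp [Tlow, mink]
  have hTlowS : ∀ (j : Fin (m+1)) p, Tlow g Φ j.succ 0 p = Tup g Φ j.succ 0 p := fun j p => by
    simp [Tlow, mink, Fin.succ_ne_zero]
  have hconsC : Continuous
      (fun q : ℝ × (Fin (m+1) → ℝ) => (Fin.cons q.1 q.2 : Fin (m+2) → ℝ)) := by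
    apply continuous_pi; intro i
    induction i using Fin.cases with
    | zero => simpa using (continuous_fst : Continuous fun q : ℝ × (Fin (m+1) → ℝ) => q.1)
    | succ j => simpa using (show
        Continuous fun q : ℝ × (Fin (m+1) → ℝ) => q.2 j from (continuous_apply j).comp continuous_snd)
  have hconsX : ∀ τ : ℝ,
      Continuous (fun x : Fin (m+1) → ℝ => (Fin.cons τ x : Fin (m+2) → ℝ)) :=
    fun τ => hconsC.comp (continuous_const.prodMk continuous_id)
  have hradC : Continuous (rad (m+1)) := continuous_rad
  have hqC : Continuous (fun q : ℝ × (Fin (m+1) → ℝ) => rad (m+1) q.2 - q.1) :=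
    (hradC.comp continuous_snd).sub continuous_fst
  -- support radius
  obtain ⟨R, hR0, hRsub⟩ : ∃ R, 0 ≤ R ∧
      tsupport Φ ∩ {p : Fin (m+2) → ℝ | t₁ ≤ p 0 ∧ p 0 ≤ t₂} ⊆ Metric.closedBall 0 R := by
    obtain ⟨r, hr⟩ := hsupp.isBounded.subset_closedBall 0
    exact ⟨max r 0, le_max_right _ _,
      hr.trans (Metric.closedBall_subset_closedBall (le_max_left _ _))⟩
  have hvan : ∀ τ ∈ Set.Icc t₁ t₂, ∀ x : Fin (m+1) → ℝ, R < ‖x‖ →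
      (Fin.cons τ x : Fin (m+2) → ℝ) ∉ tsupport Φ := by
    intro τ hτ x hx hmem
    have hin : (Fin.cons τ x : Fin (m+2) → ℝ)
        ∈ tsupport Φ ∩ {p : Fin (m+2) → ℝ | t₁ ≤ p 0 ∧ p 0 ≤ t₂} := by
      refine ⟨hmem, ?_⟩
      simp only [Set.mem_setOf_eq, Fin.cons_zero]
      exact ⟨hτ.1, hτ.2⟩
    have hball := hRsub hin
    rw [Metric.mem_closedBall, dist_zero_right] at hball
    have hxle : ‖x‖ ≤ ‖(Fin.cons τ x : Fin (m+2) → ℝ)‖ := by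
      refine (pi_norm_le_iff_of_nonneg (norm_nonneg _)).mpr (fun j => ?_)
      calc ‖x j‖ = ‖(Fin.cons τ x : Fin (m+2) → ℝ) j.succ‖ := by rw [Fin.cons_succ]
      _ ≤ _ := norm_le_pi_norm _ _
    linarith
  have hvanU : ∀ τ ∈ Set.Icc t₁ t₂, ∀ x : Fin (m+1) → ℝ, R < ‖x‖ →
      ∀ μ ν : Fin (m+2), Tup g Φ μ ν (Fin.cons τ x) = 0 :=
    fun τ hτ x hx μ ν => Tup_eq_zero_of_not_mem (hvan τ hτ x hx) μ ν
  have hvanP : ∀ τ ∈ Set.Icc t₁ t₂, ∀ x : Fin (m+1) → ℝ, R < ‖x‖ →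
      ∀ μ ν κ : Fin (m+2), pdv (Tup g Φ μ ν) κ (Fin.cons τ x) = 0 :=
    fun τ hτ x hx μ ν κ => pdv_Tup_eq_zero_of_not_mem (hvan τ hτ x hx) μ ν κ
  -- ### iA : the first interval integrand
  have hiAmeas : Measurable (fun q : ℝ × (Fin (m+1) → ℝ) =>
      (Tlow g Φ 0 0 (Fin.cons q.1 q.2)
        + ∑ j : Fin (m+1), (q.2 j / rad (m+1) q.2) * Tlow g Φ j.succ 0 (Fin.cons q.1 q.2))
        * deriv ω (rad (m+1) q.2 - q.1)) := by
    apply Measurable.mul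
    · apply Measurable.add
      · exact ((hTlowC 0 0).comp hconsC).measurable
      · apply Finset.measurable_sum
        intro j _
        exact ((((continuous_apply j).comp continuous_snd).measurable).div
          ((hradC.comp continuous_snd).measurable)).mul
          (((hTlowC j.succ 0).comp hconsC).measurable)
    · exact (hω'c.comp hqC).measurable
  have hiAbc : Continuous (fun q : ℝ × (Fin (m+1) → ℝ) =>
      (|Tlow g Φ 0 0 (Fin.cons q.1 q.2)|
        + ∑ j : Fin (m+1), |Tlow g Φ j.succ 0 (Fin.cons q.1 q.2)|)
        * |deriv ω (rad (m+1) q.2 - q.1)|) :=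
    ((((hTlowC 0 0).comp hconsC).abs).add
      (continuous_finset_sum _ fun j _ => ((hTlowC j.succ 0).comp hconsC).abs)).mul
      ((hω'c.comp hqC).abs)
  have hiAbnd : ∀ q : ℝ × (Fin (m+1) → ℝ),
      |(Tlow g Φ 0 0 (Fin.cons q.1 q.2)
        + ∑ j : Fin (m+1), (q.2 j / rad (m+1) q.2) * Tlow g Φ j.succ 0 (Fin.cons q.1 q.2))
        * deriv ω (rad (m+1) q.2 - q.1)|
      ≤ (|Tlow g Φ 0 0 (Fin.cons q.1 q.2)|
        + ∑ j : Fin (m+1), |Tlow g Φ j.succ 0 (Fin.cons q.1 q.2)|)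
        * |deriv ω (rad (m+1) q.2 - q.1)| := by
    intro q
    rw [abs_mul]
    refine mul_le_mul_of_nonneg_right ?_ (abs_nonneg _)
    refine (abs_add_le _ _).trans (add_le_add_right ?_ _)
    refine (Finset.abs_sum_le_sum_abs _ _).trans (Finset.sum_le_sum fun j _ => ?_)
    rw [abs_mul]
    exact mul_le_of_le_one_left (abs_nonneg _) (div_rad_le_one _ j)
  have hiA0 : ∀ τ ∈ Set.Icc t₁ t₂, ∀ x : Fin (m+1) → ℝ, R < ‖x‖ →
      (Tlow g Φ 0 0 (Fin.cons τ x)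
        + ∑ j : Fin (m+1), (x j / rad (m+1) x) * Tlow g Φ j.succ 0 (Fin.cons τ x))
        * deriv ω (rad (m+1) x - τ) = 0 := by
    intro τ hτ x hx
    have h := hvanU τ hτ x hx
    simp [hTlow00, hTlowS, h]
  have hiAprod : Integrable (fun q : ℝ × (Fin (m+1) → ℝ) =>
      (Tlow g Φ 0 0 (Fin.cons q.1 q.2)
        + ∑ j : Fin (m+1), (q.2 j / rad (m+1) q.2) * Tlow g Φ j.succ 0 (Fin.cons q.1 q.2))
        * deriv ω (rad (m+1) q.2 - q.1))
      ((volume.restrict (Set.Ioc t₁ t₂)).prod volume) :=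
    prod_integrable' t₁ t₂ R _ hiAmeas.aestronglyMeasurable _ hiAbc hiAbnd hiA0
  have hiAslice : ∀ τ ∈ Set.Icc t₁ t₂, Integrable (fun x : Fin (m+1) → ℝ =>
      (Tlow g Φ 0 0 (Fin.cons τ x)
        + ∑ j : Fin (m+1), (x j / rad (m+1) x) * Tlow g Φ j.succ 0 (Fin.cons τ x))
        * deriv ω (rad (m+1) x - τ)) volume := fun τ hτ =>
    slice_integrable' _ ((hiAmeas.comp measurable_prodMk_left).aestronglyMeasurable)
      _ (hiAbc.comp (Continuous.prodMk_right τ)) (fun x => hiAbnd (τ, x)) R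
      (fun x hx => hiA0 τ hτ x hx)
  -- ### iB : the second interval integrand
  have hiBcont : Continuous (fun q : ℝ × (Fin (m+1) → ℝ) =>
      (∑ μ, pdv (Tup g Φ μ 0) μ (Fin.cons q.1 q.2)) * ω (rad (m+1) q.2 - q.1)) :=
    (continuous_finset_sum _ fun μ _ => (hpdvc μ 0 μ).comp hconsC).mul (hωc.comp hqC)
  have hiB0 : ∀ τ ∈ Set.Icc t₁ t₂, ∀ x : Fin (m+1) → ℝ, R < ‖x‖ →
      (∑ μ, pdv (Tup g Φ μ 0) μ (Fin.cons τ x)) * ω (rad (m+1) x - τ) = 0 := by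
    intro τ hτ x hx
    have h := hvanP τ hτ x hx
    simp [h]
  have hiBprod : Integrable (fun q : ℝ × (Fin (m+1) → ℝ) =>
      (∑ μ, pdv (Tup g Φ μ 0) μ (Fin.cons q.1 q.2)) * ω (rad (m+1) q.2 - q.1))
      ((volume.restrict (Set.Ioc t₁ t₂)).prod volume) :=
    prod_integrable' t₁ t₂ R _ hiBcont.aestronglyMeasurable _ hiBcont.abs
      (fun q => le_refl _) hiB0
  have hiBslice : ∀ τ ∈ Set.Icc t₁ t₂, Integrable (fun x : Fin (m+1) → ℝ =>
      (∑ μ, pdv (Tup g Φ μ 0) μ (Fin.cons τ x)) * ω (rad (m+1) x - τ)) volume := fun τ hτ =>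
    slice_integrable' _ ((hiBcont.comp (Continuous.prodMk_right τ)).aestronglyMeasurable)
      _ ((hiBcont.comp (Continuous.prodMk_right τ)).abs) (fun x => le_refl _) R
      (fun x hx => hiB0 τ hτ x hx)
  -- ### DG : the time-derivative integrand
  have hDGcont : Continuous (fun q : ℝ × (Fin (m+1) → ℝ) =>
      -(pdv (Tup g Φ 0 0) 0 (Fin.cons q.1 q.2) * ω (rad (m+1) q.2 - q.1))
        + Tup g Φ 0 0 (Fin.cons q.1 q.2) * deriv ω (rad (m+1) q.2 - q.1)) :=
    ((((hpdvc 0 0 0).comp hconsC).mul (hωc.comp hqC)).neg).add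
      (((hUc 0 0).comp hconsC).mul (hω'c.comp hqC))
  have hDG0 : ∀ τ ∈ Set.Icc t₁ t₂, ∀ x : Fin (m+1) → ℝ, R < ‖x‖ →
      -(pdv (Tup g Φ 0 0) 0 (Fin.cons τ x) * ω (rad (m+1) x - τ))
        + Tup g Φ 0 0 (Fin.cons τ x) * deriv ω (rad (m+1) x - τ) = 0 := by
    intro τ hτ x hx
    rw [hvanU τ hτ x hx, hvanP τ hτ x hx]
    ring
  have hDGprod : Integrable (fun q : ℝ × (Fin (m+1) → ℝ) =>
      -(pdv (Tup g Φ 0 0) 0 (Fin.cons q.1 q.2) * ω (rad (m+1) q.2 - q.1))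
        + Tup g Φ 0 0 (Fin.cons q.1 q.2) * deriv ω (rad (m+1) q.2 - q.1))
      ((volume.restrict (Set.Ioc t₁ t₂)).prod volume) :=
    prod_integrable' t₁ t₂ R _ hDGcont.aestronglyMeasurable _ hDGcont.abs
      (fun q => le_refl _) hDG0
  have hDGslice : ∀ τ ∈ Set.Icc t₁ t₂, Integrable (fun x : Fin (m+1) → ℝ =>
      -(pdv (Tup g Φ 0 0) 0 (Fin.cons τ x) * ω (rad (m+1) x - τ))
        + Tup g Φ 0 0 (Fin.cons τ x) * deriv ω (rad (m+1) x - τ)) volume := fun τ hτ =>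
    slice_integrable' _ ((hDGcont.comp (Continuous.prodMk_right τ)).aestronglyMeasurable)
      _ ((hDGcont.comp (Continuous.prodMk_right τ)).abs) (fun x => le_refl _) R
      (fun x hx => hDG0 τ hτ x hx)
  -- almost every x is nonzero
  have hae0 : ∀ᵐ x : Fin (m+1) → ℝ, x ≠ 0 := by
    rw [ae_iff]
    have hset : {x : Fin (m+1) → ℝ | ¬ x ≠ 0} = {0} := by ext x; simp
    rw [hset]
    exact measure_singleton 0
  -- ### the per-slice identity
  have hslice : ∀ τ ∈ Set.Icc t₁ t₂,
      (∫ x : Fin (m+1) → ℝ,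
        (Tlow g Φ 0 0 (Fin.cons τ x)
          + ∑ j : Fin (m+1), (x j / rad (m+1) x) * Tlow g Φ j.succ 0 (Fin.cons τ x))
          * deriv ω (rad (m+1) x - τ))
      + (∫ x : Fin (m+1) → ℝ,
          (∑ μ, pdv (Tup g Φ μ 0) μ (Fin.cons τ x)) * ω (rad (m+1) x - τ))
      = -∫ x : Fin (m+1) → ℝ,
          (-(pdv (Tup g Φ 0 0) 0 (Fin.cons τ x) * ω (rad (m+1) x - τ))
            + Tup g Φ 0 0 (Fin.cons τ x) * deriv ω (rad (m+1) x - τ)) := by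
    intro τ hτ
    -- the flux components H j and their derivatives
    have hHc : ∀ j : Fin (m+1), Continuous (fun x : Fin (m+1) → ℝ =>
        Tup g Φ j.succ 0 (Fin.cons τ x) * ω (rad (m+1) x - τ)) := fun j =>
      ((hUc j.succ 0).comp (hconsX τ)).mul (hωc.comp (hradC.sub continuous_const))
    have hH0 : ∀ j : Fin (m+1), ∀ x : Fin (m+1) → ℝ, R < ‖x‖ →
        Tup g Φ j.succ 0 (Fin.cons τ x) * ω (rad (m+1) x - τ) = 0 := by
      intro j x hx
      rw [hvanU τ hτ x hx]
      ring
    have hderiv : ∀ (x : Fin (m+1) → ℝ), x ≠ 0 → ∀ j : Fin (m+1),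
        HasFDerivAt (fun y : Fin (m+1) → ℝ =>
            Tup g Φ j.succ 0 (Fin.cons τ y) * ω (rad (m+1) y - τ))
          ((Tup g Φ j.succ 0 (Fin.cons τ x)) •
              (deriv ω (rad (m+1) x - τ) • ((rad (m+1) x)⁻¹ • dotCLM x))
            + (ω (rad (m+1) x - τ)) •
              ((fderiv ℝ (Tup g Φ j.succ 0) (Fin.cons τ x)).comp (consCLM (m+1)))) x := by
      intro x hx j
      have hA : HasFDerivAt (fun y : Fin (m+1) → ℝ => Tup g Φ j.succ 0 (Fin.cons τ y))
          ((fderiv ℝ (Tup g Φ j.succ 0) (Fin.cons τ x)).comp (consCLM (m+1))) x :=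
        (((hUd j.succ 0) _).hasFDerivAt).comp x (hasFDerivAt_cons_spatial τ x)
      have hB : HasFDerivAt (fun y : Fin (m+1) → ℝ => ω (rad (m+1) y - τ))
          (deriv ω (rad (m+1) x - τ) • ((rad (m+1) x)⁻¹ • dotCLM x)) x :=
        ((hωd _).hasDerivAt).comp_hasFDerivAt x ((hasFDerivAt_rad hx).sub_const τ)
      exact hA.mul hB
    have heval : ∀ (x : Fin (m+1) → ℝ), x ≠ 0 → ∀ j : Fin (m+1),
        fderiv ℝ (fun y : Fin (m+1) → ℝ =>
            Tup g Φ j.succ 0 (Fin.cons τ y) * ω (rad (m+1) y - τ)) x (Pi.single j 1)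
        = pdv (Tup g Φ j.succ 0) j.succ (Fin.cons τ x) * ω (rad (m+1) x - τ)
          + Tup g Φ j.succ 0 (Fin.cons τ x)
            * (deriv ω (rad (m+1) x - τ) / rad (m+1) x) * x j := by
      intro x hx j
      rw [(hderiv x hx j).fderiv]
      simp only [ContinuousLinearMap.add_apply, ContinuousLinearMap.smul_apply,
        ContinuousLinearMap.coe_comp', Function.comp_apply, consCLM_single, dotCLM_single,
        smul_eq_mul, pdv]
      rw [div_eq_mul_inv]
      ring
    -- integrability of the divergence
    have hdivHmeas : Measurable (fun x : Fin (m+1) → ℝ =>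
        ∑ j : Fin (m+1), (pdv (Tup g Φ j.succ 0) j.succ (Fin.cons τ x) * ω (rad (m+1) x - τ)
          + Tup g Φ j.succ 0 (Fin.cons τ x)
            * (deriv ω (rad (m+1) x - τ) / rad (m+1) x) * x j)) := by
      apply Finset.measurable_sum
      intro j _
      apply Measurable.add
      · exact (((hpdvc j.succ 0 j.succ).comp (hconsX τ)).mul
          (hωc.comp (hradC.sub continuous_const))).measurable
      · exact ((((hUc j.succ 0).comp (hconsX τ)).measurable).mul
          (((hω'c.comp (hradC.sub continuous_const)).measurable).div hradC.measurable)).mul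
          (continuous_apply j).measurable
    have hdivHbc : Continuous (fun x : Fin (m+1) → ℝ =>
        ∑ j : Fin (m+1), (|pdv (Tup g Φ j.succ 0) j.succ (Fin.cons τ x)| * |ω (rad (m+1) x - τ)|
          + |Tup g Φ j.succ 0 (Fin.cons τ x)| * |deriv ω (rad (m+1) x - τ)|)) := by
      apply continuous_finset_sum
      intro j _
      exact ((((hpdvc j.succ 0 j.succ).comp (hconsX τ)).abs).mul
        ((hωc.comp (hradC.sub continuous_const)).abs)).add
        ((((hUc j.succ 0).comp (hconsX τ)).abs).mul
          ((hω'c.comp (hradC.sub continuous_const)).abs))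
    have hdivHbnd : ∀ x : Fin (m+1) → ℝ,
        |∑ j : Fin (m+1), (pdv (Tup g Φ j.succ 0) j.succ (Fin.cons τ x) * ω (rad (m+1) x - τ)
          + Tup g Φ j.succ 0 (Fin.cons τ x)
            * (deriv ω (rad (m+1) x - τ) / rad (m+1) x) * x j)|
        ≤ ∑ j : Fin (m+1), (|pdv (Tup g Φ j.succ 0) j.succ (Fin.cons τ x)|
            * |ω (rad (m+1) x - τ)|
          + |Tup g Φ j.succ 0 (Fin.cons τ x)| * |deriv ω (rad (m+1) x - τ)|) := by
      intro x
      refine (Finset.abs_sum_le_sum_abs _ _).trans (Finset.sum_le_sum fun j _ => ?_)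
      refine (abs_add_le _ _).trans (add_le_add (le_of_eq (abs_mul _ _)) ?_)
      have hrw : Tup g Φ j.succ 0 (Fin.cons τ x)
          * (deriv ω (rad (m+1) x - τ) / rad (m+1) x) * x j
          = Tup g Φ j.succ 0 (Fin.cons τ x)
            * (deriv ω (rad (m+1) x - τ) * (x j / rad (m+1) x)) := by
        ring
      rw [hrw, abs_mul, abs_mul]
      refine mul_le_mul_of_nonneg_left ?_ (abs_nonneg _)
      exact mul_le_of_le_one_right (abs_nonneg _) (div_rad_le_one _ j)
    have hdivH0 : ∀ x : Fin (m+1) → ℝ, R < ‖x‖ →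
        (∑ j : Fin (m+1), (pdv (Tup g Φ j.succ 0) j.succ (Fin.cons τ x)
            * ω (rad (m+1) x - τ)
          + Tup g Φ j.succ 0 (Fin.cons τ x)
            * (deriv ω (rad (m+1) x - τ) / rad (m+1) x) * x j)) = 0 := by
      intro x hx
      have h1 := hvanU τ hτ x hx
      have h2 := hvanP τ hτ x hx
      simp [h1, h2]
    have hdivHint : Integrable (fun x : Fin (m+1) → ℝ =>
        ∑ j : Fin (m+1), (pdv (Tup g Φ j.succ 0) j.succ (Fin.cons τ x) * ω (rad (m+1) x - τ)
          + Tup g Φ j.succ 0 (Fin.cons τ x)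
            * (deriv ω (rad (m+1) x - τ) / rad (m+1) x) * x j)) volume :=
      slice_integrable' _ hdivHmeas.aestronglyMeasurable _ hdivHbc hdivHbnd R hdivH0
    have hdivae : (fun x : Fin (m+1) → ℝ =>
        ∑ j : Fin (m+1), fderiv ℝ (fun y : Fin (m+1) → ℝ =>
          Tup g Φ j.succ 0 (Fin.cons τ y) * ω (rad (m+1) y - τ)) x (Pi.single j 1))
        =ᵐ[volume] (fun x : Fin (m+1) → ℝ =>
        ∑ j : Fin (m+1), (pdv (Tup g Φ j.succ 0) j.succ (Fin.cons τ x) * ω (rad (m+1) x - τ)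
          + Tup g Φ j.succ 0 (Fin.cons τ x)
            * (deriv ω (rad (m+1) x - τ) / rad (m+1) x) * x j)) := by
      filter_upwards [hae0] with x hx
      exact Finset.sum_congr rfl fun j _ => heval x hx j
    have hdiv_int : Integrable (fun x : Fin (m+1) → ℝ =>
        ∑ j : Fin (m+1), fderiv ℝ (fun y : Fin (m+1) → ℝ =>
          Tup g Φ j.succ 0 (Fin.cons τ y) * ω (rad (m+1) y - τ)) x (Pi.single j 1)) volume :=
      hdivHint.congr hdivae.symm
    have hdivzero : ∫ x : Fin (m+1) → ℝ,
        (∑ j : Fin (m+1), fderiv ℝ (fun y : Fin (m+1) → ℝ =>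
          Tup g Φ j.succ 0 (Fin.cons τ y) * ω (rad (m+1) y - τ)) x (Pi.single j 1)) = 0 :=
      divergence_zero _ hHc (fun x hx j => (hderiv x hx j).differentiableAt)
        hdiv_int R hR0 hH0
    have hdivHzero : ∫ x : Fin (m+1) → ℝ,
        (∑ j : Fin (m+1), (pdv (Tup g Φ j.succ 0) j.succ (Fin.cons τ x) * ω (rad (m+1) x - τ)
          + Tup g Φ j.succ 0 (Fin.cons τ x)
            * (deriv ω (rad (m+1) x - τ) / rad (m+1) x) * x j)) = 0 := by
      rw [← integral_congr_ae hdivae]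
      exact hdivzero
    -- the pointwise identity
    have hpt : ∀ x : Fin (m+1) → ℝ, x ≠ 0 →
        (Tlow g Φ 0 0 (Fin.cons τ x)
          + ∑ j : Fin (m+1), (x j / rad (m+1) x) * Tlow g Φ j.succ 0 (Fin.cons τ x))
          * deriv ω (rad (m+1) x - τ)
        + (∑ μ, pdv (Tup g Φ μ 0) μ (Fin.cons τ x)) * ω (rad (m+1) x - τ)
        = -(-(pdv (Tup g Φ 0 0) 0 (Fin.cons τ x) * ω (rad (m+1) x - τ))
            + Tup g Φ 0 0 (Fin.cons τ x) * deriv ω (rad (m+1) x - τ))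
          + ∑ j : Fin (m+1), (pdv (Tup g Φ j.succ 0) j.succ (Fin.cons τ x)
              * ω (rad (m+1) x - τ)
            + Tup g Φ j.succ 0 (Fin.cons τ x)
              * (deriv ω (rad (m+1) x - τ) / rad (m+1) x) * x j) := by
      intro x hx
      have hsplit : (∑ μ, pdv (Tup g Φ μ 0) μ (Fin.cons τ x))
          = pdv (Tup g Φ 0 0) 0 (Fin.cons τ x)
            + ∑ j : Fin (m+1), pdv (Tup g Φ j.succ 0) j.succ (Fin.cons τ x) :=
        Fin.sum_univ_succ _
      simp only [hTlow00, hTlowS]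
      rw [hsplit, Finset.sum_add_distrib]
      have h3 : (∑ j : Fin (m+1), pdv (Tup g Φ j.succ 0) j.succ (Fin.cons τ x))
          * ω (rad (m+1) x - τ)
          = ∑ j : Fin (m+1), pdv (Tup g Φ j.succ 0) j.succ (Fin.cons τ x)
            * ω (rad (m+1) x - τ) := by rw [Finset.sum_mul]
      have h4 : (∑ j : Fin (m+1), (x j / rad (m+1) x) * Tup g Φ j.succ 0 (Fin.cons τ x))
          * deriv ω (rad (m+1) x - τ)
          = ∑ j : Fin (m+1), Tup g Φ j.succ 0 (Fin.cons τ x)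
            * (deriv ω (rad (m+1) x - τ) / rad (m+1) x) * x j := by
        rw [Finset.sum_mul]
        exact Finset.sum_congr rfl fun j _ => by ring
      linear_combination h3 + h4
    -- combine
    rw [← integral_add (hiAslice τ hτ) (hiBslice τ hτ)]
    have hcongr : (fun x : Fin (m+1) → ℝ =>
        (Tlow g Φ 0 0 (Fin.cons τ x)
          + ∑ j : Fin (m+1), (x j / rad (m+1) x) * Tlow g Φ j.succ 0 (Fin.cons τ x))
          * deriv ω (rad (m+1) x - τ)
        + (∑ μ, pdv (Tup g Φ μ 0) μ (Fin.cons τ x)) * ω (rad (m+1) x - τ))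
        =ᵐ[volume] (fun x : Fin (m+1) → ℝ =>
        -(-(pdv (Tup g Φ 0 0) 0 (Fin.cons τ x) * ω (rad (m+1) x - τ))
            + Tup g Φ 0 0 (Fin.cons τ x) * deriv ω (rad (m+1) x - τ))
          + ∑ j : Fin (m+1), (pdv (Tup g Φ j.succ 0) j.succ (Fin.cons τ x)
              * ω (rad (m+1) x - τ)
            + Tup g Φ j.succ 0 (Fin.cons τ x)
              * (deriv ω (rad (m+1) x - τ) / rad (m+1) x) * x j)) := by
      filter_upwards [hae0] with x hx
      exact hpt x hx
    rw [integral_congr_ae hcongr]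
    have hneg : Integrable (fun x : Fin (m+1) → ℝ =>
        -(-(pdv (Tup g Φ 0 0) 0 (Fin.cons τ x) * ω (rad (m+1) x - τ))
          + Tup g Φ 0 0 (Fin.cons τ x) * deriv ω (rad (m+1) x - τ))) volume :=
      (hDGslice τ hτ).neg
    have hsplit2 : ∫ x : Fin (m+1) → ℝ,
        (-(-(pdv (Tup g Φ 0 0) 0 (Fin.cons τ x) * ω (rad (m+1) x - τ))
            + Tup g Φ 0 0 (Fin.cons τ x) * deriv ω (rad (m+1) x - τ))
          + ∑ j : Fin (m+1), (pdv (Tup g Φ j.succ 0) j.succ (Fin.cons τ x)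
              * ω (rad (m+1) x - τ)
            + Tup g Φ j.succ 0 (Fin.cons τ x)
              * (deriv ω (rad (m+1) x - τ) / rad (m+1) x) * x j))
        = (∫ x : Fin (m+1) → ℝ,
            -(-(pdv (Tup g Φ 0 0) 0 (Fin.cons τ x) * ω (rad (m+1) x - τ))
              + Tup g Φ 0 0 (Fin.cons τ x) * deriv ω (rad (m+1) x - τ)))
          + ∫ x : Fin (m+1) → ℝ,
            (∑ j : Fin (m+1), (pdv (Tup g Φ j.succ 0) j.succ (Fin.cons τ x)
                * ω (rad (m+1) x - τ)
              + Tup g Φ j.succ 0 (Fin.cons τ x)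
                * (deriv ω (rad (m+1) x - τ) / rad (m+1) x) * x j)) :=
      integral_add hneg hdivHint
    rw [hsplit2, integral_neg, hdivHzero, add_zero]
  -- ### interval integrability of the two inner integrals
  have hIA : IntervalIntegrable (fun τ => ∫ x : Fin (m+1) → ℝ,
      (Tlow g Φ 0 0 (Fin.cons τ x)
        + ∑ j : Fin (m+1), (x j / rad (m+1) x) * Tlow g Φ j.succ 0 (Fin.cons τ x))
        * deriv ω (rad (m+1) x - τ)) volume t₁ t₂ := by
    rw [intervalIntegrable_iff_integrableOn_Ioc_of_le ht]
    exact hiAprod.integral_prod_left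
  have hIB : IntervalIntegrable (fun τ => ∫ x : Fin (m+1) → ℝ,
      (∑ μ, pdv (Tup g Φ μ 0) μ (Fin.cons τ x)) * ω (rad (m+1) x - τ)) volume t₁ t₂ := by
    rw [intervalIntegrable_iff_integrableOn_Ioc_of_le ht]
    exact hiBprod.integral_prod_left
  -- ### FTC in the time variable
  have hGint : ∀ t ∈ Set.Icc t₁ t₂, Integrable (fun x : Fin (m+1) → ℝ =>
      Tlow g Φ 0 0 (Fin.cons t x) * ω (rad (m+1) x - t)) volume := by
    intro t htt
    have hcont : Continuous (fun x : Fin (m+1) → ℝ =>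
        Tlow g Φ 0 0 (Fin.cons t x) * ω (rad (m+1) x - t)) :=
      ((hTlowC 0 0).comp (hconsX t)).mul (hωc.comp (hradC.sub continuous_const))
    refine slice_integrable' _ hcont.aestronglyMeasurable _ hcont.abs (fun x => le_refl _) R
      (fun x hx => ?_)
    rw [hTlow00, hvanU t htt x hx]
    ring
  have hFTC : ∀ x : Fin (m+1) → ℝ, ∫ τ in Set.Ioc t₁ t₂,
      (-(pdv (Tup g Φ 0 0) 0 (Fin.cons τ x) * ω (rad (m+1) x - τ))
        + Tup g Φ 0 0 (Fin.cons τ x) * deriv ω (rad (m+1) x - τ))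
      = Tlow g Φ 0 0 (Fin.cons t₂ x) * ω (rad (m+1) x - t₂)
        - Tlow g Φ 0 0 (Fin.cons t₁ x) * ω (rad (m+1) x - t₁) := by
    intro x
    rw [← intervalIntegral.integral_of_le ht]
    apply intervalIntegral.integral_eq_sub_of_hasDerivAt
    · intro s hs
      have h1 : HasDerivAt (fun s : ℝ => Tup g Φ 0 0 (Fin.cons s x))
          (pdv (Tup g Φ 0 0) 0 (Fin.cons s x)) s :=
        (((hUd 0 0) _).hasFDerivAt).comp_hasDerivAt s (hasDerivAt_cons_time x s)
      have h1' : HasDerivAt (fun s : ℝ => Tlow g Φ 0 0 (Fin.cons s x))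
          (-pdv (Tup g Φ 0 0) 0 (Fin.cons s x)) s := by
        have hfun : (fun s : ℝ => Tlow g Φ 0 0 (Fin.cons s x))
            = fun s : ℝ => -Tup g Φ 0 0 (Fin.cons s x) := funext fun s => hTlow00 _
        rw [hfun]
        exact h1.neg
      have h2 : HasDerivAt (fun s : ℝ => ω (rad (m+1) x - s))
          (-deriv ω (rad (m+1) x - s)) s := by
        have hi : HasDerivAt (fun s : ℝ => rad (m+1) x - s) (-1) s := by
          simpa using (hasDerivAt_id s).const_sub (rad (m+1) x)
        have ho : HasDerivAt ω (deriv ω (rad (m+1) x - s)) (rad (m+1) x - s) :=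
          (hωd _).hasDerivAt
        have h := ho.comp s hi
        simp only [mul_neg, mul_one] at h
        exact h
      have hmul := h1'.mul h2
      refine hmul.congr_deriv ?_
      simp only [hTlow00]
      ring
    · apply Continuous.intervalIntegrable
      exact hDGcont.comp (continuous_id.prodMk continuous_const)
  -- ### assembling everything
  have hswap : ∫ τ in Set.Ioc t₁ t₂, ∫ x : Fin (m+1) → ℝ,
      (-(pdv (Tup g Φ 0 0) 0 (Fin.cons τ x) * ω (rad (m+1) x - τ))
        + Tup g Φ 0 0 (Fin.cons τ x) * deriv ω (rad (m+1) x - τ))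
      = ∫ x : Fin (m+1) → ℝ, ∫ τ in Set.Ioc t₁ t₂,
      (-(pdv (Tup g Φ 0 0) 0 (Fin.cons τ x) * ω (rad (m+1) x - τ))
        + Tup g Φ 0 0 (Fin.cons τ x) * deriv ω (rad (m+1) x - τ)) :=
    integral_integral_swap hDGprod
  have hkey : (∫ τ in t₁..t₂, ∫ x : Fin (m+1) → ℝ,
      (Tlow g Φ 0 0 (Fin.cons τ x)
        + ∑ j : Fin (m+1), (x j / rad (m+1) x) * Tlow g Φ j.succ 0 (Fin.cons τ x))
        * deriv ω (rad (m+1) x - τ))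
      + (∫ τ in t₁..t₂, ∫ x : Fin (m+1) → ℝ,
        (∑ μ, pdv (Tup g Φ μ 0) μ (Fin.cons τ x)) * ω (rad (m+1) x - τ))
      = (∫ x : Fin (m+1) → ℝ, Tlow g Φ 0 0 (Fin.cons t₁ x) * ω (rad (m+1) x - t₁))
        - ∫ x : Fin (m+1) → ℝ, Tlow g Φ 0 0 (Fin.cons t₂ x) * ω (rad (m+1) x - t₂) := by
    rw [← intervalIntegral.integral_add hIA hIB]
    have hEq : Set.EqOn
        (fun τ => (∫ x : Fin (m+1) → ℝ,
          (Tlow g Φ 0 0 (Fin.cons τ x)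
            + ∑ j : Fin (m+1), (x j / rad (m+1) x) * Tlow g Φ j.succ 0 (Fin.cons τ x))
            * deriv ω (rad (m+1) x - τ))
          + (∫ x : Fin (m+1) → ℝ,
            (∑ μ, pdv (Tup g Φ μ 0) μ (Fin.cons τ x)) * ω (rad (m+1) x - τ)))
        (fun τ => -∫ x : Fin (m+1) → ℝ,
          (-(pdv (Tup g Φ 0 0) 0 (Fin.cons τ x) * ω (rad (m+1) x - τ))
            + Tup g Φ 0 0 (Fin.cons τ x) * deriv ω (rad (m+1) x - τ)))
        (Set.uIcc t₁ t₂) := by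
      rw [Set.uIcc_of_le ht]
      intro τ hτ
      exact hslice τ hτ
    rw [intervalIntegral.integral_congr hEq]
    rw [intervalIntegral.integral_neg]
    rw [intervalIntegral.integral_of_le ht]
    rw [hswap]
    have hfun : (fun x : Fin (m+1) → ℝ => ∫ τ in Set.Ioc t₁ t₂,
        (-(pdv (Tup g Φ 0 0) 0 (Fin.cons τ x) * ω (rad (m+1) x - τ))
          + Tup g Φ 0 0 (Fin.cons τ x) * deriv ω (rad (m+1) x - τ)))
        = fun x : Fin (m+1) → ℝ =>
          Tlow g Φ 0 0 (Fin.cons t₂ x) * ω (rad (m+1) x - t₂)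
            - Tlow g Φ 0 0 (Fin.cons t₁ x) * ω (rad (m+1) x - t₁) := funext hFTC
    rw [hfun]
    rw [integral_sub (hGint t₂ ⟨ht, le_refl _⟩) (hGint t₁ ⟨le_refl _, ht⟩)]
    ring
  linarith [hkey]
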